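/- Let κ: ℂ → ℂ^× be a continuous quadratic form, i.e. κ(z) = κ(-z) for all z and the map ρ(z,w) = κ(z+w)κ(z)^{-1}κ(w)^{-1} is a group homomorphism (ℂ,+) → (ℂ^×,·) in each variable. Then there exist ζ, χ, ξ ∈ ℂ such that κ(z) = exp(ζ z² + χ z z̄ + ξ z̄²) for all z ∈ ℂ. -/

import Mathlib

open Complex

/-- The form `ρ(z,w) = κ(z+w)κ(z)⁻¹κ(w)⁻¹` associated to `κ`. -/
noncomputable def assocForm (κ : ℂ → ℂ) (z w : ℂ) : ℂ := κ (z + w) * (κ z)⁻¹ * (κ w)⁻¹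


lemma exp_line_unique {c c' : ℂ}
    (h : ∀ t : ℝ, Complex.exp (t * c) = Complex.exp (t * c')) : c = c' := by
  have hd : ∀ d : ℂ, HasDerivAt (fun t : ℝ => Complex.exp (t * d)) d 0 := by
    intro d
    have h1 : HasDerivAt (fun t : ℝ => (t : ℂ) * d) d 0 := by
      simpa [Complex.real_smul] using (hasDerivAt_id (0 : ℝ)).smul_const d
    simpa using h1.cexp
  have h1 := hd c
  rw [funext h] at h1
  exact h1.unique (hd c')

lemma hom_exp {f : ℝ → ℂ} (hc : Continuous f) (hom : ∀ s t : ℝ, f (s + t) = f s * f t)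
    (h0 : f 0 = 1) : ∃ c : ℂ, ∀ t : ℝ, f t = Complex.exp (t * c) := by
  obtain ⟨δ0, hδ0, hδ⟩ := Metric.continuousAt_iff.mp hc.continuousAt (1/2) (by norm_num)
  set δ := δ0 / 2 with hδdef
  have hδpos : 0 < δ := by positivity
  set F : ℝ → ℂ := fun x => ∫ t in (0:ℝ)..x, f t with hFdef
  have hFd : ∀ x, HasDerivAt F (f x) x := fun x => (hc.integral_hasStrictDerivAt 0 x).hasDerivAt
  have hFδ : F δ ≠ 0 := by
    intro h
    have h2 : F δ - δ = ∫ t in (0:ℝ)..δ, (f t - 1) := by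
      rw [intervalIntegral.integral_sub (hc.intervalIntegrable _ _) intervalIntegrable_const]
      simp [hFdef]
    have hbound : ∀ t ∈ Set.uIoc (0:ℝ) δ, ‖f t - 1‖ ≤ 1/2 := by
      intro t ht
      rw [Set.uIoc_of_le hδpos.le] at ht
      have h1 : dist t 0 < δ0 := by
        rw [Real.dist_eq, sub_zero, abs_of_pos ht.1]
        have := ht.2
        linarith
      have h2 := hδ h1
      rw [dist_eq_norm, h0] at h2
      exact h2.le
    have h3 : ‖F δ - δ‖ ≤ 1/2 * |δ - 0| :=
      h2 ▸ intervalIntegral.norm_integral_le_of_norm_le_const hbound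
    rw [h, zero_sub, norm_neg] at h3
    simp only [Complex.norm_real, Real.norm_eq_abs, sub_zero, abs_of_pos hδpos] at h3
    linarith
  have key : ∀ x : ℝ, F (x + δ) - F x = f x * F δ := by
    intro x
    have h1 : (∫ t in (0:ℝ)..δ, f (x + t)) = F (x + δ) - F x := by
      rw [intervalIntegral.integral_comp_add_left f x, add_zero]
      exact (intervalIntegral.integral_interval_sub_left (hc.intervalIntegrable 0 (x+δ))
        (hc.intervalIntegrable 0 x)).symm
    have h2 : (∫ t in (0:ℝ)..δ, f (x + t)) = f x * F δ := by
      simp only [hom]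
      rw [intervalIntegral.integral_const_mul]
    rw [← h1, h2]
  have hder : ∀ x, HasDerivAt f (f x * ((f δ - 1) * (F δ)⁻¹)) x := by
    intro x
    have hA : HasDerivAt (fun y : ℝ => F (y + δ)) (f (x + δ)) x := by
      exact (hFd (x + δ)).comp_add_const x δ
    have h1 : HasDerivAt (fun y => (F (y + δ) - F y) * (F δ)⁻¹)
        ((f (x + δ) - f x) * (F δ)⁻¹) x := (hA.sub (hFd x)).mul_const _
    have heq : (fun y => (F (y + δ) - F y) * (F δ)⁻¹) = f := by
      funext y
      rw [key y, mul_assoc, mul_inv_cancel₀ hFδ, mul_one]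
    rw [heq] at h1
    convert h1 using 1
    rw [hom x δ]; ring
  set c := (f δ - 1) * (F δ)⁻¹ with hcdef
  have hg : ∀ x : ℝ, HasDerivAt (fun x : ℝ => f x * Complex.exp (-(x * c))) 0 x := by
    intro x
    have h1 : HasDerivAt (fun t : ℝ => -((t : ℂ) * c)) (-c) x := by
      simpa [Complex.real_smul] using ((hasDerivAt_id x).smul_const c).fun_neg
    have he : HasDerivAt (fun t : ℝ => Complex.exp (-(t * c))) (Complex.exp (-(x*c)) * -c) x :=
      h1.cexp
    have := (hder x).fun_mul he
    exact this.congr_deriv (by ring)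
  have hconst : ∀ x : ℝ, f x * Complex.exp (-(x * c)) = 1 := by
    intro x
    have h1 : f x * Complex.exp (-(↑x * c)) = f 0 * Complex.exp (-((0:ℝ) * c)) :=
      is_const_of_deriv_eq_zero (fun y => (hg y).differentiableAt) (fun y => (hg y).deriv) x 0
    simpa [h0] using h1
  refine ⟨c, fun t => ?_⟩
  have h1 := hconst t
  calc f t = f t * Complex.exp (-(↑t * c)) * Complex.exp (↑t * c) := by
        rw [mul_assoc, ← Complex.exp_add]; simp
    _ = Complex.exp (↑t * c) := by rw [h1, one_mul]

/-- A continuous quadratic form `κ : ℂ → ℂ^×` on `(ℂ,+)` is of the form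
`κ(z) = exp(ζ z² + χ z z̄ + ξ z̄²)`. -/
theorem continuous_quadratic_form (κ : ℂ → ℂ)
    (hcont : Continuous κ)
    (hne : ∀ z : ℂ, κ z ≠ 0)
    (heven : ∀ z : ℂ, κ (-z) = κ z)
    (hbil₁ : ∀ z z' w : ℂ, assocForm κ (z + z') w = assocForm κ z w * assocForm κ z' w)
    (hbil₂ : ∀ z w w' : ℂ, assocForm κ z (w + w') = assocForm κ z w * assocForm κ z w') :
    ∃ ζ χ ξ : ℂ, ∀ z : ℂ,
      κ z = Complex.exp (ζ * z ^ 2 + χ * (z * (starRingEnd ℂ) z) + ξ * ((starRingEnd ℂ) z) ^ 2) := by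
  -- κ 0 = 1
  have hρne : ∀ z w, assocForm κ z w ≠ 0 := fun z w =>
    mul_ne_zero (mul_ne_zero (hne _) (inv_ne_zero (hne _))) (inv_ne_zero (hne _))
  have hκ0 : κ 0 = 1 := by
    have h1 := hbil₁ 0 0 0
    rw [add_zero] at h1
    nth_rewrite 1 [← mul_one (assocForm κ 0 0)] at h1
    have h2 := (mul_left_cancel₀ (hρne 0 0) h1).symm
    unfold assocForm at h2
    rw [add_zero, mul_inv_cancel₀ (hne 0), one_mul] at h2
    exact inv_eq_one.mp h2
  have hρ0 : ∀ v, assocForm κ 0 v = 1 := by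
    intro v
    unfold assocForm
    rw [zero_add, hκ0, inv_one, mul_one, mul_inv_cancel₀ (hne v)]
  have hρsym : ∀ z w, assocForm κ z w = assocForm κ w z := by
    intro z w; unfold assocForm; rw [add_comm]; ring
  have hmul : ∀ z w, κ (z + w) = assocForm κ z w * (κ z * κ w) := by
    intro z w; unfold assocForm; field_simp
    rw [mul_assoc, mul_div_assoc, div_self (mul_ne_zero (hne z) (hne w)), mul_one]
  -- existence of B
  have hex : ∀ u v : ℂ, ∃ c : ℂ, ∀ t : ℝ, assocForm κ (↑t * u) v = Complex.exp (↑t * c) := by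
    intro u v
    have hline : Continuous fun t : ℝ => (t : ℂ) * u := continuous_ofReal.mul continuous_const
    apply hom_exp
    · exact ((hcont.comp (hline.add continuous_const)).mul
        ((hcont.comp hline).inv₀ fun t => hne _)).mul continuous_const
    · intro s t
      have e : ((s + t : ℝ) : ℂ) * u = ↑s * u + ↑t * u := by push_cast; ring
      rw [e, hbil₁]
    · simpa using hρ0 v
  choose B hB using hex
  -- bilinearity
  have hBadd₁ : ∀ u u' v, B (u + u') v = B u v + B u' v := by
    intro u u' v
    apply exp_line_unique; intro t
    have e : (t : ℂ) * (u + u') = ↑t * u + ↑t * u' := by ring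
    rw [← hB, e, hbil₁, hB, hB, ← Complex.exp_add, mul_add]
  have hBadd₂ : ∀ u v v', B u (v + v') = B u v + B u v' := by
    intro u v v'
    apply exp_line_unique; intro t
    rw [← hB, hbil₂, hB, hB, ← Complex.exp_add, mul_add]
  have hBsmul₁ : ∀ (s : ℝ) u v, B (↑s * u) v = s * B u v := by
    intro s u v
    apply exp_line_unique; intro t
    rw [← hB]
    have e : (t : ℂ) * (↑s * u) = ((t * s : ℝ) : ℂ) * u := by push_cast; ring
    rw [e, hB]
    congr 1; push_cast; ring
  -- second-variable homogeneity + symmetry via divisibility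
  have hBsmul₂ : ∀ (t : ℝ) u v, B v (↑t * u) = t * B u v := by
    intro t₀ u v
    set ψ : ℝ → ℂ := fun t => B v (↑t * u) - ↑t * B u v with hψdef
    have hψadd : ∀ s t : ℝ, ψ (s + t) = ψ s + ψ t := by
      intro s t
      have e : ((s + t : ℝ) : ℂ) * u = ↑s * u + ↑t * u := by push_cast; ring
      simp only [hψdef, e, hBadd₂]
      push_cast; ring
    have hψint : ∀ t : ℝ, ∃ n : ℤ, ψ t = n * (2 * (Real.pi:ℂ) * I) := by
      intro t
      rw [← Complex.exp_eq_one_iff, hψdef]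
      have h1 : Complex.exp (B v (↑t * u)) = assocForm κ v (↑t * u) := by
        have := hB v (↑t * u) 1
        simpa using this.symm
      rw [Complex.exp_sub, h1, hρsym, hB]
      rw [div_self (Complex.exp_ne_zero _)]
    have hψ0 : ψ t₀ = 0 := by
      by_contra hne0
      obtain ⟨m, hm⟩ := hψint t₀
      have h2πI : (2 * (Real.pi:ℂ) * I) ≠ 0 := by
        simp [Real.pi_ne_zero, Complex.I_ne_zero]
      have hm0 : m ≠ 0 := by
        rintro rfl; rw [hm] at hne0; simp at hne0
      set n : ℤ := |m| + 1 with hndef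
      have hnpos : (0 : ℤ) < n := by positivity
      have hφ : ψ t₀ = (n : ℂ) * ψ (t₀ / n) := by
        have hn : (n : ℝ) ≠ 0 := by exact_mod_cast hnpos.ne'
        have := map_zsmul (AddMonoidHom.mk' ψ hψadd) n (t₀ / n)
        simp only [AddMonoidHom.mk'_apply, zsmul_eq_mul] at this
        rw [show (n : ℝ) * (t₀ / n) = t₀ by field_simp] at this
        simpa using this
      obtain ⟨k, hk⟩ := hψint (t₀ / n)
      have hmk : m = n * k := by
        have h3 : (m : ℂ) * (2 * (Real.pi:ℂ) * I) = (n : ℂ) * ((k : ℂ) * (2 * (Real.pi:ℂ) * I)) := by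
          rw [← hm, ← hk, hφ]
        have h4 : (m : ℂ) = (n : ℂ) * k := by
          have h5 : (m : ℂ) * (2 * (Real.pi:ℂ) * I) =
              ((n : ℂ) * (k : ℂ)) * (2 * (Real.pi:ℂ) * I) := by linear_combination h3
          exact mul_right_cancel₀ h2πI h5
        exact_mod_cast h4
      rcases eq_or_ne k 0 with rfl | hk0
      · rw [mul_zero] at hmk; exact hm0 hmk
      · have h5 : |m| = n * |k| := by
          rw [hmk, abs_mul, abs_of_pos hnpos]
        have h6 : (1 : ℤ) ≤ |k| := Int.one_le_abs (by simpa using hk0)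
        nlinarith [abs_nonneg m]
    have := hψ0
    rw [hψdef] at this
    simp only [sub_eq_zero] at this
    exact this
  have hBsym : ∀ u v, B u v = B v u := by
    intro u v
    have := hBsmul₂ 1 u v
    simpa using this.symm
  -- κ z = exp (B z z / 2)
  have hquad : ∀ z : ℂ, κ z = Complex.exp (B z z / 2) := by
    intro z
    set b := B z z with hbdef
    set g : ℝ → ℂ := fun t => κ (↑t * z) * Complex.exp (-(↑t ^ 2 * b / 2)) with hgdef
    have hρzz : ∀ s t : ℝ, assocForm κ (↑s * z) (↑t * z) = Complex.exp (↑s * (↑t * b)) := by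
      intro s t
      rw [hB, hBsmul₂]
    have ghom : ∀ s t : ℝ, g (s + t) = g s * g t := by
      intro s t
      have e : ((s + t : ℝ) : ℂ) * z = ↑s * z + ↑t * z := by push_cast; ring
      simp only [hgdef]
      rw [e, hmul, hρzz]
      have hE : Complex.exp (↑s * (↑t * b)) * Complex.exp (-(((s + t : ℝ) : ℂ) ^ 2 * b / 2)) =
          Complex.exp (-(↑s ^ 2 * b / 2)) * Complex.exp (-(↑t ^ 2 * b / 2)) := by
        rw [← Complex.exp_add, ← Complex.exp_add]
        congr 1; push_cast; ring
      linear_combination (κ (↑s * z) * κ (↑t * z)) * hE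
    have gcont : Continuous g := by
      have hline : Continuous fun t : ℝ => (t : ℂ) * z := continuous_ofReal.mul continuous_const
      exact (hcont.comp hline).mul
        (Complex.continuous_exp.comp
          ((((continuous_ofReal.pow 2).mul continuous_const).div_const 2).neg))
    have g0 : g 0 = 1 := by simp [hgdef, hκ0]
    obtain ⟨c, hcg⟩ := hom_exp gcont ghom g0
    have geven : ∀ t : ℝ, g (-t) = g t := by
      intro t
      simp only [hgdef]
      have e : ((-t : ℝ) : ℂ) * z = -(↑t * z) := by push_cast; ring
      rw [e, heven]
      congr 2
      push_cast; ring
    have hc0 : c = 0 := by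
      have h1 : c = -c := by
        apply exp_line_unique; intro t
        rw [← hcg t, ← geven t, hcg (-t)]
        congr 1; push_cast; ring
      have := add_eq_zero_iff_eq_neg.mpr h1
      linear_combination this / 2
    have hg1 : g 1 = 1 := by rw [hcg 1, hc0]; simp
    have : κ (↑(1:ℝ) * z) * Complex.exp (-(↑(1:ℝ) ^ 2 * b / 2)) = 1 := hg1
    rw [show ((1:ℝ):ℂ) * z = z by simp, show ((1:ℝ):ℂ) ^ 2 * b / 2 = b / 2 by push_cast; ring]
      at this
    calc κ z = κ z * Complex.exp (-(b / 2)) * Complex.exp (b / 2) := by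
          rw [mul_assoc, ← Complex.exp_add]; simp
      _ = Complex.exp (b / 2) := by rw [this, one_mul]
  -- final algebra
  set a' := B 1 1 with ha'
  set b' := B 1 I with hb'
  set c' := B I I with hc'
  refine ⟨(a' - c') / 8 - I * b' / 4, (a' + c') / 4, (a' - c') / 8 + I * b' / 4, fun z => ?_⟩
  rw [hquad z]
  congr 1
  have hz : z = ↑z.re * 1 + ↑z.im * I := by rw [mul_one]; exact (Complex.re_add_im z).symm
  have hBz : B z z = ↑z.re ^ 2 * a' + 2 * ↑z.re * ↑z.im * b' + ↑z.im ^ 2 * c' := by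
    conv_lhs => rw [hz]
    simp only [hBadd₁, hBadd₂, hBsmul₁, hBsmul₂]
    rw [show B I 1 = B 1 I from hBsym I 1]
    ring
  have hz2 : z ^ 2 = (↑z.re ^ 2 - ↑z.im ^ 2) + 2 * ↑z.re * ↑z.im * I := by
    apply Complex.ext <;> simp [pow_two, Complex.mul_re, Complex.mul_im] <;> ring
  have hconj : (starRingEnd ℂ) z = ↑z.re - ↑z.im * I := by
    apply Complex.ext <;> simp
  have hw2 : ((starRingEnd ℂ) z) ^ 2 = (↑z.re ^ 2 - ↑z.im ^ 2) - 2 * ↑z.re * ↑z.im * I := by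
    rw [hconj]
    apply Complex.ext <;> simp [pow_two, Complex.mul_re, Complex.mul_im] <;> ring
  have hzw : z * (starRingEnd ℂ) z = (↑z.re ^ 2 + ↑z.im ^ 2 : ℂ) := by
    rw [hconj]
    apply Complex.ext <;> simp [pow_two, Complex.mul_re, Complex.mul_im] <;> ring
  rw [hBz, hz2, hw2, hzw]
  linear_combination ((b' : ℂ) * z.re * z.im) * Complex.I_sq
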